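/- Let P be a non-commutative Poisson algebra over K, (P,·) a right Ore domain with division ring P̃, bracket extending to P̃. If x ∈ P satisfies F(x,P) = P (every element of P generates a finite-dimensional K[ad_x]-module), then F(x,P̃) = P C⁻¹ where C = (∪_{λ ∈ Ev(x,P)} D(x,P,λ)) \ {0}; i.e., every element of F(x,P̃) can be written as u w⁻¹ with u ∈ P and w a nonzero eigenvector of ad_x in P, and conversely all such elements lie in F(x,P̃). -/
import Mathlib


/-- A (possibly non-commutative) Poisson algebra structure on an associative
unital `K`-algebra `P`: a `K`-bilinear Lie bracket satisfying the Leibniz rule. -/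
structure PoissonBracket (K P : Type*) [CommRing K] [Ring P] [Algebra K P] where
  bracket : P →ₗ[K] P →ₗ[K] P
  antisymm : ∀ x y : P, bracket x y = - bracket y x
  jacobi : ∀ x y z : P,
    bracket x (bracket y z) = bracket (bracket x y) z + bracket y (bracket x z)
  leibniz : ∀ x y z : P, bracket x (y * z) = bracket x y * z + y * bracket x z

section Aux

variable {K : Type*} [Field K]

lemma PoissonBracket.bracket_one {P : Type*} [Ring P] [Algebra K P]
    (B : PoissonBracket K P) (x : P) : B.bracket x 1 = 0 := by
  have h := B.leibniz x 1 1
  simp only [mul_one, one_mul] at h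
  exact (left_eq_add.mp h)

lemma PoissonBracket.bracket_inv {D : Type*} [DivisionRing D] [Algebra K D]
    (B : PoissonBracket K D) (c d : D) (hd : d ≠ 0) :
    B.bracket c d⁻¹ = -(d⁻¹ * B.bracket c d * d⁻¹) := by
  have h := B.leibniz c d d⁻¹
  rw [mul_inv_cancel₀ hd, B.bracket_one] at h
  have h2 : d * B.bracket c d⁻¹ = -(B.bracket c d * d⁻¹) :=
    eq_neg_of_add_eq_zero_right h.symm
  calc B.bracket c d⁻¹ = d⁻¹ * (d * B.bracket c d⁻¹) := by
        rw [← mul_assoc, inv_mul_cancel₀ hd, one_mul]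
    _ = -(d⁻¹ * B.bracket c d * d⁻¹) := by rw [h2, mul_neg, mul_assoc]

variable {V : Type*} [AddCommGroup V] [Module K V]

lemma self_mem_orbit (f : V →ₗ[K] V) (v : V) :
    v ∈ Submodule.span K (Set.range fun n : ℕ => (f ^ n) v) :=
  Submodule.subset_span ⟨0, by simp⟩

lemma orbit_map (f : V →ₗ[K] V) (v : V) {u : V}
    (hu : u ∈ Submodule.span K (Set.range fun n : ℕ => (f ^ n) v)) :
    f u ∈ Submodule.span K (Set.range fun n : ℕ => (f ^ n) v) := by
  revert u
  suffices h : (Submodule.span K (Set.range fun n : ℕ => (f ^ n) v)).map f ≤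
      Submodule.span K (Set.range fun n : ℕ => (f ^ n) v) by
    intro u hu; exact h ⟨u, hu, rfl⟩
  rw [Submodule.map_span, Submodule.span_le]
  rintro _ ⟨_, ⟨n, rfl⟩, rfl⟩
  exact Submodule.subset_span ⟨n + 1, by
    show (f ^ (n + 1)) v = f ((f ^ n) v)
    rw [pow_succ', Module.End.mul_apply]⟩

lemma orbit_le (f : V →ₗ[K] V) (v : V) {S : Submodule K V} (hv : v ∈ S)
    (hS : ∀ u ∈ S, f u ∈ S) :
    Submodule.span K (Set.range fun n : ℕ => (f ^ n) v) ≤ S := by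
  rw [Submodule.span_le]
  rintro _ ⟨n, rfl⟩
  induction n with
  | zero => simpa using hv
  | succ n ih =>
    show (f ^ (n + 1)) v ∈ S
    rw [pow_succ', Module.End.mul_apply]
    exact hS ((f ^ n) v) ih

end Aux

/-- If `F(x,P) = P` (every element of `P` generates a finite-dimensional
`K[ad_x]`-module), then the torsion algebra of `x` in the right division ring of
fractions `D` of `P` is exactly `P C⁻¹`, where `C` is the set of nonzero
eigenvectors of `ad_x` in `P`. -/
theorem stmt_10 {K P D : Type*} [Field K] [CharZero K] [IsAlgClosed K]
    [Ring P] [Algebra K P] [NoZeroDivisors P]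
    [DivisionRing D] [Algebra K D]
    (B : PoissonBracket K P) (BD : PoissonBracket K D)
    (ι : P →ₐ[K] D) (hinj : Function.Injective ι)
    (hbr : ∀ a b : P, ι (B.bracket a b) = BD.bracket (ι a) (ι b))
    (hfrac : ∀ x : D, ∃ a b : P, b ≠ 0 ∧ x = ι a * (ι b)⁻¹)
    (x : P)
    (hF : ∀ y : P, FiniteDimensional K
      ↥(Submodule.span K (Set.range fun n : ℕ => (B.bracket x ^ n) y))) :
    {z : D | FiniteDimensional K
        ↥(Submodule.span K (Set.range fun n : ℕ => (BD.bracket (ι x) ^ n) z))}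
      = {z : D | ∃ (u w : P) (lam : K),
          w ≠ 0 ∧ B.bracket x w = lam • w ∧ z = ι u * (ι w)⁻¹} := by
  haveI : Nontrivial P := by
    obtain ⟨a, b, hb, -⟩ := hfrac 1
    exact ⟨b, 0, hb⟩
  classical
  have hι0 : ∀ p : P, ι p ≠ 0 ↔ p ≠ 0 := by
    intro p
    constructor
    · intro h hp; exact h (by rw [hp, map_zero])
    · intro h hc; exact h (hinj (by rw [hc, map_zero]))
  ext z
  simp only [Set.mem_setOf_eq]
  constructor
  · -- hard direction
    intro hz
    set ad : D →ₗ[K] D := BD.bracket (ι x) with had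
    set Wm : Submodule K D :=
      Submodule.span K (Set.range fun n : ℕ => (ad ^ n) z) with hWm
    have hzW : z ∈ Wm := self_mem_orbit ad z
    have hWinv : ∀ u ∈ Wm, ad u ∈ Wm := fun u hu => orbit_map ad z hu
    -- common denominator for finite sets
    have hden : ∀ s : Finset D, ∃ w : P, w ≠ 0 ∧ ∀ v ∈ s, v * ι w ∈ ι.range := by
      intro s
      induction s using Finset.induction_on with
      | empty => exact ⟨1, one_ne_zero, by simp⟩
      | @insert d s' hd ih =>
        obtain ⟨w, hw0, hw⟩ := ih
        obtain ⟨a, b, hb0, hab⟩ := hfrac (d * ι w)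
        refine ⟨w * b, mul_ne_zero hw0 hb0, ?_⟩
        intro v hv
        rcases Finset.mem_insert.mp hv with rfl | hv
        · have h1 : v * ι (w * b) = ι a := by
            rw [map_mul, ← mul_assoc, hab, mul_assoc,
              inv_mul_cancel₀ ((hι0 b).mpr hb0), mul_one]
          exact (AlgHom.mem_range ι).mpr ⟨a, h1.symm⟩
        · obtain ⟨q, hq⟩ := (AlgHom.mem_range ι).mp (hw v hv)
          refine (AlgHom.mem_range ι).mpr ⟨q * b, ?_⟩
          rw [map_mul, hq, map_mul, mul_assoc]
    -- get finite spanning set for Wm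
    obtain ⟨s, hs⟩ := (Submodule.fg_iff_finiteDimensional Wm).mpr hz
    obtain ⟨w₁, hw₁0, hw₁⟩ := hden s
    have hWden : ∀ v ∈ Wm, v * ι w₁ ∈ ι.range := by
      intro v hv
      have hle : Wm ≤ Submodule.comap (LinearMap.mulRight K (ι w₁))
          (Subalgebra.toSubmodule ι.range) := by
        rw [← hs, Submodule.span_le]
        intro d hd
        exact hw₁ d hd
      exact hle hv
    -- the denominator submodule U
    set U : Submodule K P := ⨅ v : Wm, Submodule.comap
        ((LinearMap.mulLeft K (v : D)).comp ι.toLinearMap)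
        (Subalgebra.toSubmodule ι.range) with hU
    have hmemU : ∀ p : P, p ∈ U ↔ ∀ v ∈ Wm, v * ι p ∈ ι.range := by
      intro p
      rw [hU, Submodule.mem_iInf]
      constructor
      · intro h v hv; exact h ⟨v, hv⟩
      · intro h v; exact h v v.2
    have hw₁U : w₁ ∈ U := (hmemU w₁).mpr hWden
    have hUad : ∀ p ∈ U, B.bracket x p ∈ U := by
      intro p hp
      rw [hmemU]
      intro v hv
      obtain ⟨q, hq⟩ := (AlgHom.mem_range ι).mp ((hmemU p).mp hp v hv)
      have key : v * ι (B.bracket x p) =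
          BD.bracket (ι x) (v * ι p) - BD.bracket (ι x) v * ι p := by
        rw [BD.leibniz (ι x) v (ι p), hbr]
        abel
      rw [key, ← hq, ← hbr]
      have h1 : ι (B.bracket x q) ∈ ι.range := (AlgHom.mem_range ι).mpr ⟨B.bracket x q, rfl⟩
      have h2 : BD.bracket (ι x) v * ι p ∈ ι.range :=
        (hmemU p).mp hp (ad v) (hWinv v hv)
      exact sub_mem h1 h2
    -- find an eigenvector in U
    set M : Submodule K P :=
      Submodule.span K (Set.range fun n : ℕ => (B.bracket x ^ n) w₁) with hM
    have hMfin : FiniteDimensional K M := hF w₁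
    have hMinv : ∀ p ∈ M, B.bracket x p ∈ M := fun p hp => orbit_map _ w₁ hp
    have hMU : M ≤ U := orbit_le _ w₁ hw₁U hUad
    have hw₁M : w₁ ∈ M := self_mem_orbit _ w₁
    haveI : Nontrivial M := ⟨⟨w₁, hw₁M⟩, 0, fun h => hw₁0 (by
      simpa using congrArg (Subtype.val) h)⟩
    set f : Module.End K M := (B.bracket x).restrict hMinv with hf
    obtain ⟨μ, hμ⟩ := Module.End.exists_eigenvalue f
    obtain ⟨m, hm⟩ := hμ.exists_hasEigenvector
    have hmeq : B.bracket x (m : P) = μ • (m : P) := by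
      have := Module.End.mem_eigenspace_iff.mp hm.1
      have h2 := congrArg Subtype.val this
      simpa [hf, LinearMap.restrict_apply] using h2
    have hm0 : (m : P) ≠ 0 := fun h => hm.2 (Subtype.ext h)
    have hmU : (m : P) ∈ U := hMU m.2
    obtain ⟨u, hu⟩ := (AlgHom.mem_range ι).mp ((hmemU (m : P)).mp hmU z hzW)
    refine ⟨u, (m : P), μ, hm0, hmeq, ?_⟩
    rw [hu, mul_assoc, mul_inv_cancel₀ ((hι0 _).mpr hm0), mul_one]
  · -- easy direction
    rintro ⟨u, w, lam, hw0, hwe, rfl⟩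
    set ad : D →ₗ[K] D := BD.bracket (ι x) with had
    have hιw : ι w ≠ 0 := (hι0 w).mpr hw0
    have adw : ad (ι w) = lam • ι w := by
      rw [had, ← hbr, hwe, map_smul]
    have adwinv : ad (ι w)⁻¹ = -(lam • (ι w)⁻¹) := by
      rw [had, BD.bracket_inv (ι x) (ι w) hιw, ← had, adw]
      rw [mul_smul_comm, smul_mul_assoc, inv_mul_cancel₀ hιw, one_mul]
    set Vu : Submodule K P :=
      Submodule.span K (Set.range fun n : ℕ => (B.bracket x ^ n) u) with hVu
    haveI : FiniteDimensional K Vu := hF u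
    set L : P →ₗ[K] D := (LinearMap.mulRight K (ι w)⁻¹).comp ι.toLinearMap with hL
    have hLapp : ∀ p : P, L p = ι p * (ι w)⁻¹ := fun p => rfl
    haveI : FiniteDimensional K (Vu.map L) := Module.Finite.map Vu L
    have hinv : ∀ d ∈ Vu.map L, ad d ∈ Vu.map L := by
      rintro _ ⟨p, hp, rfl⟩
      have hcalc : ad (L p) = L (B.bracket x p - lam • p) := by
        rw [hLapp, had, BD.leibniz (ι x) (ι p) ((ι w)⁻¹), ← hbr, ← had, adwinv,
          map_sub, map_smul, hLapp, hLapp]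
        rw [mul_neg, mul_smul_comm]
        abel
      rw [hcalc]
      exact ⟨_, sub_mem (orbit_map _ u hp) (Submodule.smul_mem _ lam hp), rfl⟩
    have hmem : ι u * (ι w)⁻¹ ∈ Vu.map L := ⟨u, self_mem_orbit _ u, rfl⟩
    exact Submodule.finiteDimensional_of_le (orbit_le ad _ hmem hinv)
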